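/- Let l ∈ ℤ_{≥2} ∪ {∞} and let k, m satisfy 2k < m. Then for every word w of length at most k − 1 in the free group on three letters, w represents the identity in Γ(k, l, m) = (ℤ/mℤ) ≀ D_l (with generators (+1,𝟙), (0, a δ₀), (0, b δ_k)) if and only if w represents the identity in Γ(0, 2, ∞) = ℤ ≀ D₂ (with generators (+1,𝟙), (0, a δ₀), (0, b δ₀)). In particular the balls of radius (k−1)/2 in these two marked groups coincide. -/

import Mathlib

/-- The shift automorphism of the group of `L`-valued functions on `B`. -/
def shiftEquiv {B : Type*} [AddGroup B] {L : Type*} [Group L] (b : B) :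
    (B → L) ≃* (B → L) where
  toFun f x := f (x - b)
  invFun f x := f (x + b)
  left_inv f := by funext x; simp
  right_inv f := by funext x; simp
  map_mul' f g := rfl

/-- The shift action of `B` on `B → L`, as a homomorphism to automorphisms. -/
def shiftHom (B : Type*) [AddCommGroup B] (L : Type*) [Group L] :
    Multiplicative B →* MulAut (B → L) where
  toFun b := shiftEquiv (Multiplicative.toAdd b)
  map_one' := by ext f x; simp [shiftEquiv]
  map_mul' b c := by ext f x; simp [shiftEquiv, sub_sub]

/-- The (unrestricted) wreath product `L ≀ B`, containing the lamplighter group `B ≀ L`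
of the paper as the subgroup generated by the marked generators. -/
abbrev Wr (B : Type*) [AddCommGroup B] (L : Type*) [Group L] :=
  (B → L) ⋊[shiftHom B L] Multiplicative B

/-- The function equal to `v` at `g` and neutral elsewhere. -/
def delta {B : Type*} [DecidableEq B] {L : Type*} [Group L] (g : B) (v : L) : B → L :=
  fun x => if x = g then v else 1

/-- The marked generators `τ = (+1, 𝟙)`, `α = (0, a δ₀)`, `β = (0, b δ_k)` of
`Γ(k, l, m) = (ℤ/mℤ) ≀ D_l` (with `m = 0` meaning `ℤ`, and `l = 0` meaning `D_∞`). -/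
def gammaGens (k l m : ℕ) : Fin 3 → Wr (ZMod m) (DihedralGroup l) :=
  ![⟨1, Multiplicative.ofAdd 1⟩,
    ⟨delta 0 (DihedralGroup.sr 0), 1⟩,
    ⟨delta (k : ZMod m) (DihedralGroup.sr 1), 1⟩]


namespace Stmt10

open DihedralGroup Multiplicative

abbrev Letter := (Fin 3) × Bool

/-- cursor displacement of a letter -/
def stepz (ε : Bool) : ℤ := if ε then 1 else -1

/-- parity of the number of `α`-lamps lit at a given position -/
def aM (m : ℕ) : List Letter → ZMod m → ZMod 2
  | [], _ => 0
  | (i, ε) :: L, x =>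
    if i = 0 then aM m L (x - ((stepz ε : ℤ) : ZMod m))
    else if i = 1 then (if x = 0 then 1 else 0) + aM m L x
    else aM m L x

/-- parity of the number of `β`-lamps lit at a given position -/
def bM (m k : ℕ) : List Letter → ZMod m → ZMod 2
  | [], _ => 0
  | (i, ε) :: L, x =>
    if i = 0 then bM m k L (x - ((stepz ε : ℤ) : ZMod m))
    else if i = 2 then (if x = (k : ZMod m) then 1 else 0) + bM m k L x
    else bM m k L x

/-- total cursor displacement -/
def eZ : List Letter → ℤ
  | [] => 0
  | (i, ε) :: L => (if i = 0 then stepz ε else 0) + eZ L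

/-- the lamp value encoded by a pair of parities -/
def psi (l : ℕ) (a b : ZMod 2) : DihedralGroup l :=
  (if a = 1 then sr 0 else 1) * (if b = 1 then sr 1 else 1)

lemma aM_nil (m : ℕ) (x : ZMod m) : aM m [] x = 0 := by simp [aM]
lemma aM_cons0 (m : ℕ) (ε : Bool) (L : List Letter) (x : ZMod m) :
    aM m ((0, ε) :: L) x = aM m L (x - ((stepz ε : ℤ) : ZMod m)) := by simp [aM]
lemma aM_cons1 (m : ℕ) (ε : Bool) (L : List Letter) (x : ZMod m) :
    aM m ((1, ε) :: L) x = (if x = 0 then 1 else 0) + aM m L x := by simp [aM]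
lemma aM_cons2 (m : ℕ) (ε : Bool) (L : List Letter) (x : ZMod m) :
    aM m ((2, ε) :: L) x = aM m L x := by simp [aM]

lemma bM_nil (m k : ℕ) (x : ZMod m) : bM m k [] x = 0 := by simp [bM]
lemma bM_cons0 (m k : ℕ) (ε : Bool) (L : List Letter) (x : ZMod m) :
    bM m k ((0, ε) :: L) x = bM m k L (x - ((stepz ε : ℤ) : ZMod m)) := by simp [bM]
lemma bM_cons1 (m k : ℕ) (ε : Bool) (L : List Letter) (x : ZMod m) :
    bM m k ((1, ε) :: L) x = bM m k L x := by simp [bM]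
lemma bM_cons2 (m k : ℕ) (ε : Bool) (L : List Letter) (x : ZMod m) :
    bM m k ((2, ε) :: L) x = (if x = (k : ZMod m) then 1 else 0) + bM m k L x := by simp [bM]

lemma eZ_nil : eZ [] = 0 := rfl
lemma eZ_cons0 (ε : Bool) (L : List Letter) : eZ ((0, ε) :: L) = stepz ε + eZ L := by simp [eZ]
lemma eZ_cons1 (ε : Bool) (L : List Letter) : eZ ((1, ε) :: L) = eZ L := by simp [eZ]
lemma eZ_cons2 (ε : Bool) (L : List Letter) : eZ ((2, ε) :: L) = eZ L := by simp [eZ]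

lemma zmod2 (a : ZMod 2) : a = 0 ∨ a = 1 := by revert a; decide

lemma cast_ne {m : ℕ} (k : ℕ) (hm : m = 0 ∨ 2 * k < m) {c : ℤ} (h0 : c ≠ 0)
    (hc : |c| ≤ 2 * k) : ((c : ℤ) : ZMod m) ≠ 0 := by
  intro h
  rw [ZMod.intCast_zmod_eq_zero_iff_dvd] at h
  rcases hm with rfl | hm
  · rw [Nat.cast_zero, zero_dvd_iff] at h; exact h0 h
  · exact h0 (Int.eq_zero_of_abs_lt_dvd h (by omega))

lemma step_abs (ε : Bool) : |stepz ε| ≤ 1 := by cases ε <;> simp [stepz]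

lemma eZ_abs : ∀ L : List Letter, |eZ L| ≤ L.length := by
  intro L
  induction L with
  | nil => simp [eZ]
  | cons p L ih =>
    obtain ⟨i, ε⟩ := p
    have h1 := step_abs ε
    have h2 := abs_add_le (if i = 0 then stepz ε else 0) (eZ L)
    have h3 : |(if i = 0 then stepz ε else 0)| ≤ 1 := by
      by_cases hi : i = 0 <;> simp [hi] <;> omega
    simp only [eZ, List.length_cons]
    push_cast
    omega

lemma aM_off (m : ℕ) : ∀ (L : List Letter) (x : ZMod m),
    (∀ c : ℤ, |c| < (L.length : ℤ) → x ≠ (c : ZMod m)) → aM m L x = 0 := by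
  intro L
  induction L with
  | nil => intro x _; simp [aM]
  | cons p L ih =>
    obtain ⟨i, ε⟩ := p
    intro x hx
    simp only [List.length_cons] at hx
    fin_cases i <;> beta_reduce <;> simp only [Fin.zero_eta, Fin.mk_one, Fin.reduceFinMk]
    · rw [aM_cons0]
      apply ih
      intro c hc h
      refine hx (c + stepz ε) ?_ ?_
      · have h1 := step_abs ε
        have h2 := abs_add_le c (stepz ε)
        push_cast
        omega
      · rw [sub_eq_iff_eq_add] at h
        rw [h]; push_cast; ring
    · rw [aM_cons1]
      have hx0 : x ≠ 0 := by
        have := hx 0 (by rw [abs_zero]; push_cast; omega)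
        simpa using this
      rw [if_neg hx0, zero_add]
      exact ih x (fun c hc => hx c (by push_cast; omega))
    · rw [aM_cons2]
      exact ih x (fun c hc => hx c (by push_cast; omega))

lemma bM_off (m k : ℕ) : ∀ (L : List Letter) (x : ZMod m),
    (∀ c : ℤ, |c| < (L.length : ℤ) → x ≠ ((c + k : ℤ) : ZMod m)) → bM m k L x = 0 := by
  intro L
  induction L with
  | nil => intro x _; simp [bM]
  | cons p L ih =>
    obtain ⟨i, ε⟩ := p
    intro x hx
    simp only [List.length_cons] at hx
    fin_cases i <;> beta_reduce <;> simp only [Fin.zero_eta, Fin.mk_one, Fin.reduceFinMk]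
    · rw [bM_cons0]
      apply ih
      intro c hc h
      refine hx (c + stepz ε) ?_ ?_
      · have h1 := step_abs ε
        have h2 := abs_add_le c (stepz ε)
        push_cast
        omega
      · rw [sub_eq_iff_eq_add] at h
        rw [h]; push_cast; ring
    · rw [bM_cons1]
      exact ih x (fun c hc => hx c (by push_cast; omega))
    · rw [bM_cons2]
      have hx0 : x ≠ (k : ZMod m) := by
        have := hx 0 (by rw [abs_zero]; push_cast; omega)
        simpa using this
      rw [if_neg hx0, zero_add]
      exact ih x (fun c hc => hx c (by push_cast; omega))

lemma aM_cast {m : ℕ} (k : ℕ) (hm : m = 0 ∨ 2 * k < m) :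
    ∀ (L : List Letter) (c : ℤ), |c| + L.length ≤ 2 * (k : ℤ) - 2 →
    aM m L ((c : ℤ) : ZMod m) = aM 0 L ((c : ℤ) : ZMod 0) := by
  intro L
  induction L with
  | nil => intro c _; simp [aM]
  | cons p L ih =>
    obtain ⟨i, ε⟩ := p
    intro c hc
    simp only [List.length_cons] at hc
    push_cast at hc
    have hstep := step_abs ε
    fin_cases i <;> beta_reduce <;> simp only [Fin.zero_eta, Fin.mk_one, Fin.reduceFinMk]
    · erw [aM_cons0, aM_cons0]
      have h1 : ((c : ℤ) : ZMod m) - ((stepz ε : ℤ) : ZMod m) = (((c - stepz ε : ℤ)) : ZMod m) := by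
        push_cast; ring
      have h2 : ((c : ℤ) : ZMod 0) - ((stepz ε : ℤ) : ZMod 0) = (((c - stepz ε : ℤ)) : ZMod 0) := by
        push_cast; ring
      rw [h1, h2]
      apply ih
      have h3 := abs_add_le c (- stepz ε)
      rw [abs_neg] at h3
      have : c - stepz ε = c + - stepz ε := by ring
      rw [this]
      omega
    · erw [aM_cons1, aM_cons1]
      have hiff : (((c : ℤ) : ZMod m) = 0) ↔ (c = 0) := by
        constructor
        · intro h
          by_contra h0
          exact cast_ne k hm h0 (by omega) h
        · rintro rfl; simp
      have hiff0 : (((c : ℤ) : ZMod 0) = 0) ↔ (c = 0) := by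
        constructor
        · intro h; exact_mod_cast h
        · rintro rfl; simp
      rw [ih c (by omega)]
      by_cases h0 : c = 0
      · rw [if_pos (hiff.mpr h0)]; erw [if_pos (hiff0.mpr h0)]
      · rw [if_neg (fun h => h0 (hiff.mp h))]; erw [if_neg (fun h => h0 (hiff0.mp h))]
    · erw [aM_cons2]
      exact ih c (by omega)

lemma bM_cast {m : ℕ} (k : ℕ) (hm : m = 0 ∨ 2 * k < m) :
    ∀ (L : List Letter) (c : ℤ), |c| + L.length ≤ 2 * (k : ℤ) - 2 →
    bM m k L (((c + k : ℤ)) : ZMod m) = bM 0 0 L ((c : ℤ) : ZMod 0) := by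
  intro L
  induction L with
  | nil => intro c _; simp [bM]
  | cons p L ih =>
    obtain ⟨i, ε⟩ := p
    intro c hc
    simp only [List.length_cons] at hc
    push_cast at hc
    have hstep := step_abs ε
    fin_cases i <;> beta_reduce <;> simp only [Fin.zero_eta, Fin.mk_one, Fin.reduceFinMk]
    · erw [bM_cons0, bM_cons0]
      have h1 : (((c + k : ℤ)) : ZMod m) - ((stepz ε : ℤ) : ZMod m)
          = ((((c - stepz ε) + k : ℤ)) : ZMod m) := by push_cast; ring
      have h2 : ((c : ℤ) : ZMod 0) - ((stepz ε : ℤ) : ZMod 0)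
          = (((c - stepz ε : ℤ)) : ZMod 0) := by push_cast; ring
      rw [h1, h2]
      apply ih
      have h3 := abs_add_le c (- stepz ε)
      rw [abs_neg] at h3
      have : c - stepz ε = c + - stepz ε := by ring
      rw [this]
      omega
    · erw [bM_cons1]
      exact ih c (by omega)
    · erw [bM_cons2, bM_cons2]
      have hiff : ((((c + k : ℤ)) : ZMod m) = ((k : ℕ) : ZMod m)) ↔ (c = 0) := by
        constructor
        · intro h
          by_contra h0
          have h' : ((c : ℤ) : ZMod m) = 0 := by
            have hsub : (((c + k : ℤ)) : ZMod m) - ((k : ℕ) : ZMod m) = ((c : ℤ) : ZMod m) := by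
              push_cast; ring
            rw [← hsub, h, sub_self]
          exact cast_ne k hm h0 (by omega) h'
        · rintro rfl; push_cast; ring
      have hiff0 : (((c : ℤ) : ZMod 0) = ((0 : ℕ) : ZMod 0)) ↔ (c = 0) := by
        constructor
        · intro h; rw [Nat.cast_zero] at h; exact_mod_cast h
        · rintro rfl; simp
      rw [ih c (by omega)]
      by_cases h0 : c = 0
      · rw [if_pos (hiff.mpr h0)]; erw [if_pos (hiff0.mpr h0)]
      · rw [if_neg (fun h => h0 (hiff.mp h))]; erw [if_neg (fun h => h0 (hiff0.mp h))]

lemma sdp_eq_one_iff {N G : Type*} [Group N] [Group G] {φ : G →* MulAut N}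
    (a : N ⋊[φ] G) : a = 1 ↔ a.left = 1 ∧ a.right = 1 := by
  constructor
  · rintro rfl; exact ⟨rfl, rfl⟩
  · rintro ⟨h1, h2⟩; exact SemidirectProduct.ext h1 h2

lemma psi_eq_one {l : ℕ} (hl : l = 0 ∨ 2 ≤ l) (a b : ZMod 2) :
    psi l a b = 1 ↔ a = 0 ∧ b = 0 := by
  have hone : ((1 : ZMod l)) ≠ 0 := by
    intro h
    have h' : ((1 : ℤ) : ZMod l) = 0 := by exact_mod_cast h
    rw [ZMod.intCast_zmod_eq_zero_iff_dvd] at h'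
    have := Int.le_of_dvd (by norm_num) h'
    rcases hl with rfl | hl
    · simp at h'
    · omega
  rcases zmod2 a with rfl | rfl <;> rcases zmod2 b with rfl | rfl <;>
    simp only [psi, if_pos rfl, if_neg (by decide : ¬ (0 : ZMod 2) = 1), one_mul, mul_one, if_true]
  · simp
  · rw [one_def]; constructor
    · intro h; exact absurd h (by intro h'; cases h')
    · rintro ⟨_, h⟩; exact absurd h (by decide)
  · rw [one_def]; constructor
    · intro h; exact absurd h (by intro h'; cases h')
    · rintro ⟨h, _⟩; exact absurd h (by decide)
  · rw [sr_mul_sr, one_def]; constructor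
    · intro h
      rw [r.injEq] at h
      exact absurd (by rw [← h]; simp) hone
    · rintro ⟨h, _⟩; exact absurd h (by decide)


lemma sr_inv {l : ℕ} (i : ZMod l) : (sr i)⁻¹ = sr i :=
  inv_eq_of_mul_eq_one_right (sr_mul_self i)

lemma delta_inv {B : Type*} [DecidableEq B] {L : Type*} [Group L] (g : B) (v : L) :
    (delta g v)⁻¹ = delta g v⁻¹ := by
  funext x
  by_cases h : x = g <;> simp [delta, h]

lemma sdp_mul {N G : Type*} [Group N] [Group G] {φ : G →* MulAut N}
    (f g : N) (s t : G) : (⟨f, s⟩ : N ⋊[φ] G) * ⟨g, t⟩ = ⟨f * φ s g, s * t⟩ := rfl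

lemma sdp_inv_lamp {N G : Type*} [Group N] [Group G] {φ : G →* MulAut N}
    (f : N) : (⟨f, 1⟩ : N ⋊[φ] G)⁻¹ = ⟨f⁻¹, 1⟩ := by
  refine SemidirectProduct.ext ?_ ?_
  · simp [SemidirectProduct.inv_left]
  · simp

lemma sdp_inv_shift {N G : Type*} [Group N] [Group G] {φ : G →* MulAut N}
    (t : G) : (⟨1, t⟩ : N ⋊[φ] G)⁻¹ = ⟨1, t⁻¹⟩ := by
  refine SemidirectProduct.ext ?_ ?_
  · simp [SemidirectProduct.inv_left]
  · simp

lemma sdp_mk_injEq {N G : Type*} [Group N] [Group G] {φ : G →* MulAut N}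
    (a c : N) (b d : G) : ((⟨a, b⟩ : N ⋊[φ] G) = ⟨c, d⟩) = (a = c ∧ b = d) := by
  rw [SemidirectProduct.ext_iff]

lemma shift_apply {B : Type*} [AddCommGroup B] {L : Type*} [Group L]
    (b : B) (F : B → L) (x : B) : (shiftHom B L (Multiplicative.ofAdd b)) F x = F (x - b) := rfl

lemma gg0 (k l m : ℕ) : gammaGens k l m 0 = ⟨1, Multiplicative.ofAdd 1⟩ := rfl
lemma gg1 (k l m : ℕ) : gammaGens k l m 1 = ⟨delta 0 (sr 0), 1⟩ := rfl
lemma gg2 (k l m : ℕ) : gammaGens k l m 2 = ⟨delta (k : ZMod m) (sr 1), 1⟩ := rfl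

lemma psi_merge_a {l : ℕ} (a b : ZMod 2) (h : b = 0 ∨ l = 2) :
    sr 0 * psi l a b = psi l (1 + a) b := by
  rcases h with rfl | rfl
  · rcases zmod2 a with rfl | rfl <;>
      simp [psi, (by decide : ¬ (0 : ZMod 2) = 1), (by decide : (1 + 0 : ZMod 2) = 1),
        (by decide : (1 + 1 : ZMod 2) = 0), sr_mul_sr]
  · revert a b; decide

lemma psi_merge_b {l : ℕ} (a b : ZMod 2) (h : a = 0 ∨ l = 2) :
    sr 1 * psi l a b = psi l a (1 + b) := by
  rcases h with rfl | rfl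
  · rcases zmod2 b with rfl | rfl <;>
      simp [psi, (by decide : ¬ (0 : ZMod 2) = 1), (by decide : (1 + 0 : ZMod 2) = 1),
        (by decide : (1 + 1 : ZMod 2) = 0), sr_mul_sr]
  · revert a b; decide

lemma lift_cons {G : Type*} [Group G] (g : Fin 3 → G) (p : Letter) (L : List Letter) :
    FreeGroup.lift g (FreeGroup.mk (p :: L))
      = (cond p.2 (g p.1) (g p.1)⁻¹) * FreeGroup.lift g (FreeGroup.mk L) := by
  rw [show (p :: L) = [p] ++ L from rfl, ← FreeGroup.mul_mk, map_mul]
  congr 1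
  rw [FreeGroup.lift_mk]
  simp

lemma formula (k l m : ℕ) (hm : m = 0 ∨ 2 * k < m) :
    ∀ L : List Letter, (l = 2 ∨ (L.length : ℤ) ≤ (k : ℤ) - 1) →
    FreeGroup.lift (gammaGens k l m) (FreeGroup.mk L)
      = ⟨fun x => psi l (aM m L x) (bM m k L x), Multiplicative.ofAdd ((eZ L : ℤ) : ZMod m)⟩ := by
  intro L
  induction L with
  | nil =>
    intro _
    rw [← FreeGroup.one_eq_mk, map_one]
    refine ((sdp_eq_one_iff _).mpr ⟨?_, ?_⟩).symm
    · show (fun x => psi l (aM m [] x) (bM m k [] x)) = 1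
      funext x
      rw [aM_nil, bM_nil]
      simp [psi, (by decide : ¬ (0 : ZMod 2) = 1)]
    · show Multiplicative.ofAdd ((eZ [] : ℤ) : ZMod m) = 1
      simp [eZ_nil]
  | cons p L ih =>
    intro hok
    have hok' : l = 2 ∨ (L.length : ℤ) ≤ (k : ℤ) - 1 := by
      rcases hok with h | h
      · exact Or.inl h
      · right; simp only [List.length_cons] at h; push_cast at h ⊢; omega
    rw [lift_cons, ih hok']
    obtain ⟨i, ε⟩ := p
    have hb0 : bM m k L 0 = 0 ∨ l = 2 := by
      rcases hok with h | h
      · exact Or.inr h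
      · left
        apply bM_off
        intro c hc hne
        simp only [List.length_cons] at h
        push_cast at h
        have hcb : |c| ≤ (k : ℤ) - 2 := by omega
        have ht := abs_add_le c (k : ℤ)
        have hkk : |(k : ℤ)| = k := abs_of_nonneg (by positivity)
        have h5 := neg_abs_le c
        have h6 := le_abs_self c
        have hck : (c + k : ℤ) ≠ 0 := by omega
        have habs : |(c + k : ℤ)| ≤ 2 * k := by omega
        exact cast_ne k hm hck habs hne.symm
    have ha0 : aM m L ((k : ℕ) : ZMod m) = 0 ∨ l = 2 := by
      rcases hok with h | h
      · exact Or.inr h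
      · left
        apply aM_off
        intro c hc hne
        simp only [List.length_cons] at h
        push_cast at h
        have h1 : ((k - c : ℤ) : ZMod m) = 0 := by
          push_cast
          rw [← hne]
          push_cast
          ring
        have hcb : |c| ≤ (k : ℤ) - 2 := by omega
        have ht := abs_sub (k : ℤ) c
        have hkk : |(k : ℤ)| = k := abs_of_nonneg (by positivity)
        have h5 := neg_abs_le c
        have h6 := le_abs_self c
        have hck : (k - c : ℤ) ≠ 0 := by omega
        have habs : |(k - c : ℤ)| ≤ 2 * k := by omega
        exact cast_ne k hm hck habs h1
    fin_cases i <;> beta_reduce <;> simp only [Fin.zero_eta, Fin.mk_one, Fin.reduceFinMk] <;>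
      cases ε
    -- i = 0, ε = false : τ⁻¹
    · rw [show (cond false (gammaGens k l m 0) (gammaGens k l m 0)⁻¹) = (gammaGens k l m 0)⁻¹
        from rfl, gg0, sdp_inv_shift,
        show ((Multiplicative.ofAdd (1 : ZMod m))⁻¹) = Multiplicative.ofAdd (-1 : ZMod m) by simp,
        sdp_mul, sdp_mk_injEq]
      refine ⟨?_, ?_⟩
      · rw [one_mul]
        funext x
        rw [shift_apply, aM_cons0, bM_cons0]
        show psi l (aM m L (x - -1)) (bM m k L (x - -1)) = _
        rw [show ((stepz false : ℤ) : ZMod m) = -1 by simp [stepz]]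
      · rw [eZ_cons0, show stepz false = (-1 : ℤ) from rfl]
        push_cast
        rw [← ofAdd_add]
    -- i = 0, ε = true : τ
    · rw [show (cond true (gammaGens k l m 0) (gammaGens k l m 0)⁻¹) = gammaGens k l m 0
        from rfl, gg0, sdp_mul, sdp_mk_injEq]
      refine ⟨?_, ?_⟩
      · rw [one_mul]
        funext x
        rw [shift_apply, aM_cons0, bM_cons0]
        show psi l (aM m L (x - 1)) (bM m k L (x - 1)) = _
        rw [show ((stepz true : ℤ) : ZMod m) = 1 by simp [stepz]]
      · rw [eZ_cons0, show stepz true = (1 : ℤ) from rfl]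
        push_cast
        rw [← ofAdd_add]
    -- i = 1, ε = false : α⁻¹
    · rw [show (cond false (gammaGens k l m 1) (gammaGens k l m 1)⁻¹) = (gammaGens k l m 1)⁻¹
        from rfl, gg1, sdp_inv_lamp, delta_inv, sr_inv, sdp_mul, map_one,
        sdp_mk_injEq]
      refine ⟨?_, ?_⟩
      · rw [MulAut.one_apply]
        funext x
        rw [Pi.mul_apply, aM_cons1, bM_cons1]
        by_cases hx : x = 0
        · subst hx
          rw [if_pos rfl, show delta (0 : ZMod m) (sr 0) 0 = sr 0 from if_pos rfl]
          show sr 0 * psi l (aM m L 0) (bM m k L 0) = psi l (1 + aM m L 0) (bM m k L 0)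
          rcases hb0 with h | h
          · rw [h]; exact psi_merge_a _ _ (Or.inl rfl)
          · exact psi_merge_a _ _ (Or.inr h)
        · rw [if_neg hx, show delta (0 : ZMod m) (sr 0) x = 1 from if_neg hx, zero_add]
          show 1 * psi l (aM m L x) (bM m k L x) = psi l (aM m L x) (bM m k L x)
          rw [one_mul]
      · rw [eZ_cons1, one_mul]
    -- i = 1, ε = true : α
    · rw [show (cond true (gammaGens k l m 1) (gammaGens k l m 1)⁻¹) = gammaGens k l m 1
        from rfl, gg1, sdp_mul, map_one, sdp_mk_injEq]
      refine ⟨?_, ?_⟩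
      · rw [MulAut.one_apply]
        funext x
        rw [Pi.mul_apply, aM_cons1, bM_cons1]
        by_cases hx : x = 0
        · subst hx
          rw [if_pos rfl, show delta (0 : ZMod m) (sr 0) 0 = sr 0 from if_pos rfl]
          show sr 0 * psi l (aM m L 0) (bM m k L 0) = psi l (1 + aM m L 0) (bM m k L 0)
          rcases hb0 with h | h
          · rw [h]; exact psi_merge_a _ _ (Or.inl rfl)
          · exact psi_merge_a _ _ (Or.inr h)
        · rw [if_neg hx, show delta (0 : ZMod m) (sr 0) x = 1 from if_neg hx, zero_add]
          show 1 * psi l (aM m L x) (bM m k L x) = psi l (aM m L x) (bM m k L x)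
          rw [one_mul]
      · rw [eZ_cons1, one_mul]
    -- i = 2, ε = false : β⁻¹
    · rw [show (cond false (gammaGens k l m 2) (gammaGens k l m 2)⁻¹) = (gammaGens k l m 2)⁻¹
        from rfl, gg2, sdp_inv_lamp, delta_inv, sr_inv, sdp_mul, map_one,
        sdp_mk_injEq]
      refine ⟨?_, ?_⟩
      · rw [MulAut.one_apply]
        funext x
        rw [Pi.mul_apply, aM_cons2, bM_cons2]
        by_cases hx : x = ((k : ℕ) : ZMod m)
        · rw [if_pos hx, show delta ((k : ℕ) : ZMod m) (sr 1) x = sr 1 from if_pos hx, hx]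
          show sr 1 * psi l (aM m L ((k : ℕ) : ZMod m)) (bM m k L ((k : ℕ) : ZMod m))
            = psi l (aM m L ((k : ℕ) : ZMod m)) (1 + bM m k L ((k : ℕ) : ZMod m))
          rcases ha0 with h | h
          · rw [h]; exact psi_merge_b _ _ (Or.inl rfl)
          · exact psi_merge_b _ _ (Or.inr h)
        · rw [if_neg hx, show delta ((k : ℕ) : ZMod m) (sr 1) x = 1 from if_neg hx, zero_add]
          show 1 * psi l (aM m L x) (bM m k L x) = psi l (aM m L x) (bM m k L x)
          rw [one_mul]
      · rw [eZ_cons2, one_mul]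
    -- i = 2, ε = true : β
    · rw [show (cond true (gammaGens k l m 2) (gammaGens k l m 2)⁻¹) = gammaGens k l m 2
        from rfl, gg2, sdp_mul, map_one, sdp_mk_injEq]
      refine ⟨?_, ?_⟩
      · rw [MulAut.one_apply]
        funext x
        rw [Pi.mul_apply, aM_cons2, bM_cons2]
        by_cases hx : x = ((k : ℕ) : ZMod m)
        · rw [if_pos hx, show delta ((k : ℕ) : ZMod m) (sr 1) x = sr 1 from if_pos hx, hx]
          show sr 1 * psi l (aM m L ((k : ℕ) : ZMod m)) (bM m k L ((k : ℕ) : ZMod m))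
            = psi l (aM m L ((k : ℕ) : ZMod m)) (1 + bM m k L ((k : ℕ) : ZMod m))
          rcases ha0 with h | h
          · rw [h]; exact psi_merge_b _ _ (Or.inl rfl)
          · exact psi_merge_b _ _ (Or.inr h)
        · rw [if_neg hx, show delta ((k : ℕ) : ZMod m) (sr 1) x = 1 from if_neg hx, zero_add]
          show 1 * psi l (aM m L x) (bM m k L x) = psi l (aM m L x) (bM m k L x)
          rw [one_mul]
      · rw [eZ_cons2, one_mul]


lemma cast0_id (c : ℤ) : (Int.cast c : ZMod 0) = c := rfl

lemma forall_cast0 (P : ZMod 0 → Prop) :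
    (∀ x : ZMod 0, P x) ↔ (∀ c : ℤ, P ((c : ℤ) : ZMod 0)) :=
  ⟨fun h c => h _, fun h x => h x⟩

lemma cond_iff (k l m : ℕ) (hl : l = 0 ∨ 2 ≤ l) (hm : m = 0 ∨ 2 * k < m) (L : List Letter)
    (hok : l = 2 ∨ (L.length : ℤ) ≤ (k : ℤ) - 1) :
    FreeGroup.lift (gammaGens k l m) (FreeGroup.mk L) = 1 ↔
      ((∀ x : ZMod m, aM m L x = 0) ∧ (∀ x : ZMod m, bM m k L x = 0) ∧
        ((eZ L : ℤ) : ZMod m) = 0) := by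
  rw [formula k l m hm L hok, sdp_eq_one_iff]
  constructor
  · rintro ⟨h1, h2⟩
    refine ⟨fun x => ((psi_eq_one hl _ _).mp (congrFun h1 x)).1,
            fun x => ((psi_eq_one hl _ _).mp (congrFun h1 x)).2, ?_⟩
    exact ofAdd_eq_one.mp h2
  · rintro ⟨h1, h2, h3⟩
    refine ⟨funext fun x => ?_, ?_⟩
    · show psi l (aM m L x) (bM m k L x) = 1
      rw [h1 x, h2 x]
      exact (psi_eq_one hl 0 0).mpr ⟨rfl, rfl⟩
    · show Multiplicative.ofAdd ((eZ L : ℤ) : ZMod m) = 1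
      rw [h3]
      rfl

lemma bridge (k m : ℕ) (hm : m = 0 ∨ 2 * k < m) (h2k : 2 ≤ k) (L : List Letter)
    (hL : (L.length : ℤ) ≤ (k : ℤ) - 1) :
    ((∀ x : ZMod m, aM m L x = 0) ∧ (∀ x : ZMod m, bM m k L x = 0) ∧
        ((eZ L : ℤ) : ZMod m) = 0) ↔
    ((∀ x : ZMod 0, aM 0 L x = 0) ∧ (∀ x : ZMod 0, bM 0 0 L x = 0) ∧
        ((eZ L : ℤ) : ZMod 0) = 0) := by
  have heZ : |eZ L| ≤ (L.length : ℤ) := by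
    have := eZ_abs L
    push_cast
    omega
  constructor
  · rintro ⟨h1, h2, h3⟩
    refine ⟨?_, ?_, ?_⟩
    · rw [forall_cast0]
      intro c
      by_cases hc : |c| < (L.length : ℤ)
      · rw [← aM_cast k hm L c (by omega)]
        exact h1 _
      · apply aM_off
        intro c' hc' hne
        have hcc : c = c' := by exact_mod_cast hne
        exact hc (by rw [hcc]; exact hc')
    · rw [forall_cast0]
      intro c
      by_cases hc : |c| < (L.length : ℤ)
      · rw [← bM_cast k hm L c (by omega)]
        exact h2 _
      · apply bM_off
        intro c' hc' hne
        have hcc : c = c' := by rw [hne]; push_cast; rw [add_zero]; exact cast0_id c'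
        exact hc (by rw [hcc]; exact hc')
    · have h0 : eZ L = 0 := by
        by_contra h0
        exact cast_ne k hm h0 (by omega) h3
      rw [h0]
  · rintro ⟨h1, h2, h3⟩
    have h3' : eZ L = 0 := by exact_mod_cast h3
    refine ⟨?_, ?_, ?_⟩
    · intro x
      by_cases hex : ∃ c : ℤ, |c| < (L.length : ℤ) ∧ x = ((c : ℤ) : ZMod m)
      · obtain ⟨c, hc, rfl⟩ := hex
        rw [aM_cast k hm L c (by omega)]
        exact h1 _
      · push_neg at hex
        exact aM_off m L x hex
    · intro x
      by_cases hex : ∃ c : ℤ, |c| < (L.length : ℤ) ∧ x = (((c + k) : ℤ) : ZMod m)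
      · obtain ⟨c, hc, rfl⟩ := hex
        rw [bM_cast k hm L c (by omega)]
        exact h2 _
      · push_neg at hex
        exact bM_off m k L x hex
    · rw [h3']
      simp

end Stmt10

theorem stmt10 (k l m : ℕ) (hl : l = 0 ∨ 2 ≤ l) (hm : m = 0 ∨ 2 * k < m)
    (w : FreeGroup (Fin 3)) (hw : (FreeGroup.toWord w).length ≤ k - 1) :
    FreeGroup.lift (gammaGens k l m) w = 1 ↔ FreeGroup.lift (gammaGens 0 2 0) w = 1 := by
  by_cases hk : k ≤ 1
  · have h0 : (FreeGroup.toWord w).length = 0 := by omega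
    have hw1 : w = 1 := FreeGroup.toWord_eq_nil_iff.mp (List.length_eq_zero_iff.mp h0)
    subst hw1
    simp
  · push_neg at hk
    have h2k : 2 ≤ k := hk
    have hL : ((FreeGroup.toWord w).length : ℤ) ≤ (k : ℤ) - 1 := by
      have h' : (FreeGroup.toWord w).length + 1 ≤ k := by omega
      push_cast
      omega
    conv_lhs => rw [← FreeGroup.mk_toWord (x := w)]
    conv_rhs => rw [← FreeGroup.mk_toWord (x := w)]
    rw [Stmt10.cond_iff k l m hl hm _ (Or.inr hL),
      Stmt10.cond_iff 0 2 0 (Or.inr (le_refl 2)) (Or.inl rfl) _ (Or.inl rfl)]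
    exact Stmt10.bridge k m hm h2k _ hL
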